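/- Let f(x) = ∑_{m=1}^{∞} (1 − (1 − 2^{−m})^{2^x}) for real x. For every real x with 0 ≤ x < 1, as the integer k → ∞, f(x+k) − (x+k) converges to −x − ∑_{m=−∞}^{0} exp(−2^{x−m}) + ∑_{m=1}^{∞} (1 − exp(−2^{x−m})). -/

import Mathlib

open Real Filter

/-- `f(x) = ∑_{m=1}^∞ (1 - (1 - 2^{-m})^{2^x})`, the sum over `m ≥ 1`
reindexed by `m = j+1`, `j : ℕ`; the exponent `2^x` is a real power. -/
noncomputable def f (x : ℝ) : ℝ :=
  ∑' j : ℕ, (1 - (1 - (2 : ℝ)⁻¹ ^ (j + 1)) ^ ((2 : ℝ) ^ x))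

open Topology


lemma log_one_sub_bound {t : ℝ} (ht0 : 0 < t) (ht : t ≤ 1/2) :
    -Real.log (1 - t) - t ≤ 2 * t ^ 2 := by
  have h1 : (0:ℝ) < 1 - t := by linarith
  have h2 : Real.log (1 - t)⁻¹ ≤ (1 - t)⁻¹ - 1 :=
    Real.log_le_sub_one_of_pos (inv_pos.mpr h1)
  rw [Real.log_inv] at h2
  have h3 : (1 - t)⁻¹ ≤ 1 + t + 2 * t ^ 2 := by
    rw [inv_eq_one_div, div_le_iff₀ h1]; nlinarith
  linarith

lemma pow_le_exp_aux {t N : ℝ} (ht0 : 0 < t) (ht1 : t < 1) (hN : 0 ≤ N) :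
    (1 - t) ^ N ≤ exp (-(N * t)) := by
  have h1 : (0:ℝ) < 1 - t := by linarith
  rw [Real.rpow_def_of_pos h1]
  apply Real.exp_le_exp.mpr
  have hlog : Real.log (1 - t) ≤ -t := by
    have := Real.log_le_sub_one_of_pos h1; linarith
  nlinarith [mul_le_mul_of_nonneg_right hlog hN]

lemma diff_le_aux {t N : ℝ} (ht0 : 0 < t) (ht : t ≤ 1/2) (hN : 0 < N) :
    exp (-(N * t)) - (1 - t) ^ N ≤ 2 * t := by
  have h1 : (0:ℝ) < 1 - t := by linarith
  have hδ0 : 0 ≤ -Real.log (1 - t) - t := by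
    have := Real.log_le_sub_one_of_pos h1; linarith
  have hδ : -Real.log (1 - t) - t ≤ 2 * t ^ 2 := log_one_sub_bound ht0 ht
  set δ := -Real.log (1 - t) - t with hδdef
  have hpow : (1 - t) ^ N = exp (-(N * t)) * exp (-(N * δ)) := by
    rw [Real.rpow_def_of_pos h1, ← Real.exp_add]
    congr 1
    have : Real.log (1 - t) = -(t + δ) := by rw [hδdef]; ring
    rw [this]; ring
  have h2 : 1 - exp (-(N * δ)) ≤ N * δ := by
    have := Real.add_one_le_exp (-(N * δ)); linarith
  have hE : (0:ℝ) < exp (-(N * t)) := Real.exp_pos _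
  have h3 : N * t * exp (-(N * t)) ≤ 1 := by
    have he := Real.add_one_le_exp (N * t)
    have hee : exp (-(N * t)) * exp (N * t) = 1 := by
      rw [← Real.exp_add]; simp
    nlinarith [mul_le_mul_of_nonneg_left he hE.le]
  rw [hpow]
  nlinarith [mul_le_mul_of_nonneg_left h2 hE.le,
    mul_le_mul_of_nonneg_left hδ (mul_nonneg hN.le hE.le),
    mul_le_mul_of_nonneg_left h3 (by positivity : (0:ℝ) ≤ 2 * t)]

noncomputable def tt (j : ℕ) : ℝ := (2:ℝ)⁻¹ ^ (j+1)
noncomputable def NN (x : ℝ) (k : ℕ) : ℝ := (2:ℝ) ^ (x + (k:ℝ))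
noncomputable def ek (x : ℝ) (k j : ℕ) : ℝ :=
  exp (-(NN x k * tt j)) - (1 - tt j) ^ (NN x k)

lemma tt_pos (j : ℕ) : 0 < tt j := by unfold tt; positivity

lemma tt_le (j : ℕ) : tt j ≤ 1/2 := by
  unfold tt
  calc (2:ℝ)⁻¹ ^ (j+1) ≤ (2:ℝ)⁻¹ ^ 1 :=
        pow_le_pow_of_le_one (by norm_num) (by norm_num) (by omega)
    _ = 1/2 := by norm_num

lemma NN_pos (x : ℝ) (k : ℕ) : 0 < NN x k := Real.rpow_pos_of_pos (by norm_num) _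

lemma summable_tt : Summable tt := by
  have h : tt = fun j => (2:ℝ)⁻¹ * (2:ℝ)⁻¹ ^ j := by
    funext j; unfold tt; rw [pow_succ]; ring
  rw [h]
  exact (summable_geometric_of_lt_one (by norm_num) (by norm_num)).mul_left _

lemma NN_mul_tt (x : ℝ) (k j : ℕ) :
    NN x k * tt j = (2:ℝ) ^ (x + (k:ℝ) - ((j:ℝ) + 1)) := by
  have h1 : tt j = (2:ℝ) ^ (-((j:ℝ) + 1)) := by
    unfold tt
    rw [show -((j:ℝ)+1) = -((j+1:ℕ):ℝ) by push_cast; ring,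
      Real.rpow_neg (by norm_num : (0:ℝ) ≤ 2), Real.rpow_natCast, ← inv_pow]
  rw [h1]; unfold NN
  rw [← Real.rpow_add (by norm_num : (0:ℝ) < 2), ← sub_eq_add_neg]

lemma ek_nonneg (x : ℝ) (k j : ℕ) : 0 ≤ ek x k j := by
  have := pow_le_exp_aux (tt_pos j) (by have := tt_le j; linarith) (NN_pos x k).le
  unfold ek; linarith

lemma ek_le (x : ℝ) (k j : ℕ) : ek x k j ≤ 2 * tt j :=
  diff_le_aux (tt_pos j) (tt_le j) (NN_pos x k)

lemma ek_le_exp (x : ℝ) (k j : ℕ) : ek x k j ≤ exp (-(NN x k * tt j)) := by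
  have h : (0:ℝ) ≤ (1 - tt j) ^ (NN x k) :=
    Real.rpow_nonneg (by have := tt_le j; linarith) _
  unfold ek; linarith

lemma one_sub_exp_nonneg {u : ℝ} (hu : 0 ≤ u) : 0 ≤ 1 - exp (-u) := by
  have : exp (-u) ≤ exp 0 := Real.exp_le_exp.mpr (by linarith)
  rw [Real.exp_zero] at this; linarith

lemma one_sub_exp_le (u : ℝ) : 1 - exp (-u) ≤ u := by
  have := Real.add_one_le_exp (-u); linarith

lemma summable_ek (x : ℝ) (k : ℕ) : Summable (ek x k) :=
  Summable.of_nonneg_of_le (ek_nonneg x k) (ek_le x k) (summable_tt.mul_left 2)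

lemma summable_bk (x : ℝ) (k : ℕ) :
    Summable (fun j => 1 - exp (-(NN x k * tt j))) := by
  refine Summable.of_nonneg_of_le (fun j => one_sub_exp_nonneg ?_)
    (fun j => ?_) (summable_tt.mul_left (NN x k))
  · exact (mul_pos (NN_pos x k) (tt_pos j)).le
  · exact one_sub_exp_le _

lemma summable_C1 {x : ℝ} (hx0 : 0 ≤ x) :
    Summable (fun j : ℕ => exp (-(2:ℝ) ^ (x + (j:ℝ)))) := by
  refine Summable.of_nonneg_of_le (fun j => (Real.exp_pos _).le) (fun j => ?_)
    (summable_geometric_of_lt_one (by norm_num : (0:ℝ) ≤ 2⁻¹) (by norm_num))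
  have h1 : (2:ℝ) ^ (j:ℕ) ≤ (2:ℝ) ^ (x + (j:ℝ)) := by
    rw [← Real.rpow_natCast (2:ℝ) j]
    exact Real.rpow_le_rpow_of_exponent_le one_le_two (by linarith)
  have h2 : (2:ℝ) ^ (j:ℕ) ≤ exp ((2:ℝ) ^ (x + (j:ℝ))) := by
    have := Real.add_one_le_exp ((2:ℝ) ^ (x + (j:ℝ))); linarith
  rw [Real.exp_neg, inv_pow]
  exact inv_anti₀ (by positivity) h2

lemma summable_C2 {x : ℝ} (hx1 : x < 1) :
    Summable (fun j : ℕ => 1 - exp (-(2:ℝ) ^ (x - ((j:ℝ) + 1)))) := by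
  refine Summable.of_nonneg_of_le
    (fun j => one_sub_exp_nonneg (Real.rpow_pos_of_pos (by norm_num) _).le)
    (fun j => ?_)
    (summable_geometric_of_lt_one (by norm_num : (0:ℝ) ≤ 2⁻¹) (by norm_num))
  calc 1 - exp (-(2:ℝ) ^ (x - ((j:ℝ)+1))) ≤ (2:ℝ) ^ (x - ((j:ℝ)+1)) := one_sub_exp_le _
    _ ≤ (2:ℝ) ^ (-(j:ℝ)) := Real.rpow_le_rpow_of_exponent_le one_le_two (by linarith)
    _ = (2:ℝ)⁻¹ ^ j := by
        rw [Real.rpow_neg (by norm_num), Real.rpow_natCast, inv_pow]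

theorem f_sub_linear_tendsto (x : ℝ) (hx0 : 0 ≤ x) (hx1 : x < 1) :
    Tendsto (fun k : ℕ => f (x + k) - (x + k)) atTop
      (nhds (-x - (∑' j : ℕ, Real.exp (-(2 : ℝ) ^ (x + j)))
        + ∑' j : ℕ, (1 - Real.exp (-(2 : ℝ) ^ (x - (j + 1)))))) := by
  set C1 := ∑' j : ℕ, Real.exp (-(2 : ℝ) ^ (x + (j:ℝ))) with hC1def
  set C2 := ∑' j : ℕ, (1 - Real.exp (-(2 : ℝ) ^ (x - ((j:ℝ) + 1)))) with hC2def
  set S := fun k : ℕ => ∑ i ∈ Finset.range k, exp (-(2:ℝ) ^ (x + (i:ℝ))) with hSdef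
  have step1 : ∀ k : ℕ, f (x + (k:ℝ)) =
      (∑' j, ek x k j) + ∑' j, (1 - exp (-(NN x k * tt j))) := by
    intro k
    have h : ∀ j : ℕ, (1 - (1 - (2:ℝ)⁻¹ ^ (j + 1)) ^ ((2:ℝ) ^ (x + (k:ℝ))))
        = ek x k j + (1 - exp (-(NN x k * tt j))) := by
      intro j; unfold ek NN tt; ring
    unfold f
    rw [tsum_congr h, Summable.tsum_add (summable_ek x k) (summable_bk x k)]
  have step2 : ∀ k : ℕ, (∑' j, (1 - exp (-(NN x k * tt j)))) = (k:ℝ) - S k + C2 := by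
    intro k
    rw [← Summable.sum_add_tsum_nat_add k (summable_bk x k)]
    have htail : ∀ j : ℕ, (1 - exp (-(NN x k * tt (j + k))))
        = 1 - exp (-(2:ℝ) ^ (x - ((j:ℝ) + 1))) := by
      intro j
      have hc : x + (k:ℝ) - (((j + k : ℕ):ℝ) + 1) = x - ((j:ℝ) + 1) := by
        push_cast; ring
      rw [NN_mul_tt, hc]
    have hhead : ∑ j ∈ Finset.range k, (1 - exp (-(NN x k * tt j))) = (k:ℝ) - S k := by
      rw [Finset.sum_sub_distrib, Finset.sum_const, Finset.card_range, nsmul_eq_mul, mul_one]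
      congr 1
      simp only [hSdef]
      rw [← Finset.sum_range_reflect (fun i => exp (-(2:ℝ) ^ (x + (i:ℝ)))) k]
      apply Finset.sum_congr rfl
      intro j hj
      have hjk : j + 1 ≤ k := Finset.mem_range.mp hj
      have hc : x + (k:ℝ) - ((j:ℝ) + 1) = x + ((k - 1 - j : ℕ):ℝ) := by
        rw [Nat.sub_sub, Nat.cast_sub (by omega : 1 + j ≤ k)]
        push_cast; ring
      rw [NN_mul_tt, hc]
    rw [tsum_congr htail, hhead, hC2def]
  have hC1 : Summable (fun j : ℕ => exp (-(2:ℝ) ^ (x + (j:ℝ)))) := summable_C1 hx0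
  have hS : Tendsto S atTop (𝓝 C1) := hC1.hasSum.tendsto_sum_nat
  have hE : Tendsto (fun k : ℕ => ∑' j, ek x k j) atTop (𝓝 0) := by
    have h0 : Tendsto (fun k : ℕ => ∑' j, ek x k j) atTop (𝓝 (∑' _ : ℕ, (0:ℝ))) := by
      apply tendsto_tsum_of_dominated_convergence (bound := fun j => 2 * tt j)
        (summable_tt.mul_left 2)
      · intro j
        apply squeeze_zero (fun k => ek_nonneg x k j) (fun k => ek_le_exp x k j)
        have h1 : Tendsto (fun k : ℕ => NN x k * tt j) atTop atTop := by
          have h2 : Tendsto (fun k : ℕ => ((2:ℝ) ^ x * tt j) * 2 ^ k) atTop atTop :=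
            (tendsto_pow_atTop_atTop_of_one_lt one_lt_two).const_mul_atTop
              (mul_pos (Real.rpow_pos_of_pos (by norm_num) x) (tt_pos j))
          refine h2.congr fun k => ?_
          unfold NN
          rw [Real.rpow_add (by norm_num : (0:ℝ) < 2), Real.rpow_natCast]
          ring
        exact Real.tendsto_exp_neg_atTop_nhds_zero.comp h1
      · filter_upwards with k
        intro j
        rw [Real.norm_eq_abs, abs_of_nonneg (ek_nonneg x k j)]
        exact ek_le x k j
    simpa using h0
  have hmain : Tendsto (fun k : ℕ => (∑' j, ek x k j) + ((C2 - x) - S k)) atTop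
      (𝓝 (0 + ((C2 - x) - C1))) := hE.add (tendsto_const_nhds.sub hS)
  have hcongr : ∀ k : ℕ, (∑' j, ek x k j) + ((C2 - x) - S k)
      = f (x + (k:ℝ)) - (x + (k:ℝ)) := by
    intro k; rw [step1 k, step2 k]; ring
  have hfin := hmain.congr hcongr
  rw [show -x - C1 + C2 = 0 + ((C2 - x) - C1) by ring]
  exact hfin
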